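/- Fix τ₀ in the upper half plane ℍ. There exists a constant c > 0 such that |θ₁₁(z; τ₀)| ≥ c·|z| for all z in the closed fundamental parallelogram Λ := {z ∈ ℂ : |x(z)| ≤ 1/2 and |y(z)| ≤ 1/2}. -/

import Mathlib

open Filter Topology

noncomputable section

/-- The elliptic theta function
`θ₁₁(z;τ) = ∑_{m ∈ ℤ} exp(π√-1((m+1/2)²τ + 2(m+1/2)(z+1/2)))`. -/
def theta (z τ : ℂ) : ℂ :=
  ∑' m : ℤ, Complex.exp ((Real.pi : ℂ) * Complex.I *
    (((m : ℂ) + 1 / 2) ^ 2 * τ + 2 * ((m : ℂ) + 1 / 2) * (z + 1 / 2)))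

def thetaTerm (m : ℤ) (z τ : ℂ) : ℂ :=
  Complex.exp ((Real.pi : ℂ) * Complex.I *
    (((m : ℂ) + 1 / 2) ^ 2 * τ + 2 * ((m : ℂ) + 1 / 2) * (z + 1 / 2)))

def Complex.abs : AbsoluteValue ℂ ℝ := NormedField.toAbsoluteValue ℂ

theorem Complex.norm_eq_abs (z : ℂ) : ‖z‖ = Complex.abs z := rfl

theorem Complex.abs_exp (z : ℂ) : Complex.abs (Complex.exp z) = Real.exp z.re := Complex.norm_exp z

theorem Complex.continuous_abs : Continuous Complex.abs := continuous_norm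

theorem Complex.abs_ofReal (r : ℝ) : Complex.abs (r : ℂ) = |r| := by
  show ‖(r : ℂ)‖ = |r|; simp

theorem Complex.abs_two : Complex.abs 2 = 2 := by
  show ‖(2 : ℂ)‖ = 2; simp

theorem Complex.abs_im_le_abs (z : ℂ) : |z.im| ≤ Complex.abs z := Complex.abs_im_le_norm z

theorem Complex.abs.pos {z : ℂ} (hz : z ≠ 0) : 0 < Complex.abs z := norm_pos_iff.mpr hz

lemma theta_def (z τ : ℂ) : theta z τ = ∑' m : ℤ, thetaTerm m z τ := rfl

lemma thetaTerm_eq (m : ℤ) (z τ : ℂ) :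
    thetaTerm m z τ = Complex.exp ((Real.pi : ℂ) * Complex.I * (τ/4 + z + 1/2)) *
      jacobiTheta₂_term m (z + 1/2 + τ/2) τ := by
  rw [thetaTerm, jacobiTheta₂_term, ← Complex.exp_add]
  congr 1
  push_cast
  ring

lemma summable_thetaTerm {τ : ℂ} (hτ : 0 < τ.im) (z : ℂ) :
    Summable fun m : ℤ => thetaTerm m z τ := by
  have := ((summable_jacobiTheta₂_term_iff (z + 1/2 + τ/2) τ).mpr hτ).mul_left
    (Complex.exp ((Real.pi : ℂ) * Complex.I * (τ/4 + z + 1/2)))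
  exact this.congr fun m => (thetaTerm_eq m z τ).symm

lemma theta_eq_jacobi (z : ℂ) (τ : ℂ) :
    theta z τ = Complex.exp ((Real.pi : ℂ) * Complex.I * (τ/4 + z + 1/2)) *
      jacobiTheta₂ (z + 1/2 + τ/2) τ := by
  rw [theta_def, jacobiTheta₂, ← tsum_mul_left]
  exact tsum_congr fun m => thetaTerm_eq m z τ

lemma theta_continuous {τ : ℂ} (hτ : 0 < τ.im) : Continuous fun z => theta z τ := by
  rw [continuous_iff_continuousAt]
  intro z
  have h1 : ContinuousAt (fun p : ℂ × ℂ => jacobiTheta₂ p.1 p.2) (z + 1/2 + τ/2, τ) :=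
    continuousAt_jacobiTheta₂ _ hτ
  have h2 : ContinuousAt (fun w : ℂ => jacobiTheta₂ (w + 1/2 + τ/2) τ) z :=
    h1.comp (f := fun w : ℂ => (w + 1/2 + τ/2, τ)) (by fun_prop)
  have : ContinuousAt (fun w => Complex.exp ((Real.pi : ℂ) * Complex.I * (τ/4 + w + 1/2)) *
      jacobiTheta₂ (w + 1/2 + τ/2) τ) z := by
    apply ContinuousAt.mul _ h2
    exact (Complex.continuous_exp.comp (by fun_prop)).continuousAt
  exact this.congr (by filter_upwards with w using (theta_eq_jacobi w τ).symm)

lemma theta_add_tau (z τ : ℂ) :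
    theta (z + τ) τ = Complex.exp (-(Real.pi:ℂ) * Complex.I * (τ + 2*z + 1)) * theta z τ := by
  rw [theta_def, theta_def]
  conv_rhs => rw [← tsum_mul_left, ← (Equiv.addRight (1 : ℤ)).tsum_eq]
  refine tsum_congr fun m => ?_
  simp_rw [thetaTerm, Equiv.coe_addRight, ← Complex.exp_add]
  congr 1
  push_cast
  ring

lemma theta_tau_add_one (z τ : ℂ) :
    theta z (τ + 1) = Complex.exp ((Real.pi:ℂ) * Complex.I / 4) * theta z τ := by
  rw [theta_def, theta_def, ← tsum_mul_left]
  refine tsum_congr fun m => ?_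
  obtain ⟨k, hk⟩ : Even (m * (m + 1)) := Int.even_mul_succ_self m
  rw [thetaTerm, thetaTerm, ← Complex.exp_add]
  have h : (Real.pi : ℂ) * Complex.I * (((m : ℂ) + 1 / 2) ^ 2 * (τ + 1) + 2 * ((m : ℂ) + 1 / 2) * (z + 1 / 2))
      = (k : ℂ) * (2 * Real.pi * Complex.I) + ((Real.pi:ℂ) * Complex.I / 4 +
        (Real.pi : ℂ) * Complex.I * (((m : ℂ) + 1 / 2) ^ 2 * τ + 2 * ((m : ℂ) + 1 / 2) * (z + 1 / 2))) := by
    have : ((m : ℂ) * (m + 1)) = (k : ℂ) + (k : ℂ) := by exact_mod_cast congrArg (Int.cast : ℤ → ℂ) hk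
    linear_combination ((Real.pi:ℂ) * Complex.I) * this
  rw [h, Complex.exp_add, Complex.exp_int_mul_two_pi_mul_I, one_mul]

lemma theta_S {τ : ℂ} (hτ : 0 < τ.im) :
    ∃ u : ℂ → ℂ, Continuous u ∧ (∀ z, u z ≠ 0) ∧
      ∀ z, theta z τ = u z * theta (z / τ) (-1 / τ) := by
  have hτ0 : τ ≠ 0 := fun h => by simp [h] at hτ
  refine ⟨fun z => 1/(-Complex.I*τ)^((1:ℂ)/2 : ℂ) * Complex.exp
      ((Real.pi:ℂ)*Complex.I*(τ/4+z+1/2) + (-(Real.pi:ℂ)*Complex.I*(z+1/2+τ/2)^2/τ)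
        + (Real.pi:ℂ)*Complex.I*(-1/τ + 2*((z/τ+1/2+(-1/τ)/2) - (-1/τ)))
        - (Real.pi:ℂ)*Complex.I*((-1/τ)/4 + z/τ + 1/2)), ?_, ?_, ?_⟩
  · exact continuous_const.mul (Complex.continuous_exp.comp (by fun_prop))
  · intro z
    apply mul_ne_zero _ (Complex.exp_ne_zero _)
    refine one_div_ne_zero ?_
    rw [Ne, Complex.cpow_eq_zero_iff]
    rintro ⟨h1, -⟩
    exact (mul_ne_zero (neg_ne_zero.2 Complex.I_ne_zero) hτ0) h1
  · intro z
    rw [theta_eq_jacobi z τ, jacobiTheta₂_functional_equation (z+1/2+τ/2) τ,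
      theta_eq_jacobi (z/τ) (-1/τ)]
    have hw : (z + 1/2 + τ/2)/τ = (z/τ+1/2+(-1/τ)/2) - (-1/τ) := by
      field_simp; ring
    rw [hw]
    have h3 := jacobiTheta₂_add_left' ((z/τ+1/2+(-1/τ)/2) - (-1/τ)) (-1/τ)
    rw [sub_add_cancel] at h3
    rw [h3]
    have key : Complex.exp ((Real.pi:ℂ)*Complex.I*(τ/4+z+1/2)) *
        Complex.exp (-(Real.pi:ℂ)*Complex.I*(z+1/2+τ/2)^2/τ) =
        Complex.exp ((Real.pi:ℂ)*Complex.I*(τ/4+z+1/2) + (-(Real.pi:ℂ)*Complex.I*(z+1/2+τ/2)^2/τ)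
          + (Real.pi:ℂ)*Complex.I*(-1/τ + 2*((z/τ+1/2+(-1/τ)/2) - (-1/τ)))
          - (Real.pi:ℂ)*Complex.I*((-1/τ)/4 + z/τ + 1/2)) *
        Complex.exp ((Real.pi:ℂ)*Complex.I*((-1/τ)/4 + z/τ + 1/2)) *
        Complex.exp (-(Real.pi:ℂ)*Complex.I*(-1/τ + 2*((z/τ+1/2+(-1/τ)/2) - (-1/τ)))) := by
      rw [← Complex.exp_add, ← Complex.exp_add, ← Complex.exp_add]
      congr 1
      ring
    linear_combination (1/(-Complex.I*τ)^((1:ℂ)/2 : ℂ) *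
      jacobiTheta₂ ((z/τ+1/2+(-1/τ)/2) - (-1/τ)) (-1/τ)) * key

lemma abs_exp_mul_I (v : ℂ) : Complex.abs (Complex.exp (v * Complex.I)) = Real.exp (-v.im) := by
  rw [Complex.abs_exp]; congr 1; simp

lemma abs_cos_le (v : ℂ) : Complex.abs (Complex.cos v) ≤ Real.exp |v.im| := by
  have h1 := abs_exp_mul_I (-v)
  have h2 := abs_exp_mul_I v
  rw [Complex.neg_im, neg_neg] at h1
  have e1 : Real.exp v.im ≤ Real.exp |v.im| := Real.exp_le_exp.mpr (le_abs_self _)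
  have e2 : Real.exp (-v.im) ≤ Real.exp |v.im| := Real.exp_le_exp.mpr (neg_le_abs _)
  rw [show Complex.cos v = (Complex.exp (v * Complex.I) + Complex.exp (-v * Complex.I)) / 2 by rw [← Complex.two_cos]; ring, map_div₀, Complex.abs_two]
  calc Complex.abs (Complex.exp (v * Complex.I) + Complex.exp (-v * Complex.I)) / 2
      ≤ (Complex.abs (Complex.exp (v * Complex.I)) + Complex.abs (Complex.exp (-v * Complex.I))) / 2 := by
        gcongr; exact Complex.abs.add_le _ _
    _ ≤ Real.exp |v.im| := by rw [h1, h2]; linarith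

lemma abs_sin_nat_mul_le (N : ℕ) (v : ℂ) :
    Complex.abs (Complex.sin ((N : ℂ) * v)) ≤
      N * Real.exp (((N : ℝ) - 1) * |v.im|) * Complex.abs (Complex.sin v) := by
  induction N with
  | zero => simp
  | succ n ih =>
    have hadd : ((n:ℂ)+1) * v = (n:ℂ) * v + v := by ring
    push_cast
    rw [hadd, Complex.sin_add]
    have hcn : Complex.abs (Complex.cos ((n:ℂ)*v)) ≤ Real.exp ((n:ℝ) * |v.im|) := by
      refine (abs_cos_le _).trans ?_
      rw [show ((n:ℂ)*v).im = (n:ℝ) * v.im by simp, abs_mul, Nat.abs_cast]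
    have hE : Real.exp (((n:ℝ)-1)*|v.im|) * Real.exp |v.im| = Real.exp ((n:ℝ)*|v.im|) := by
      rw [← Real.exp_add]; ring_nf
    have hS : (0:ℝ) ≤ Complex.abs (Complex.sin v) := Complex.abs.nonneg _
    calc Complex.abs (Complex.sin ((n:ℂ)*v) * Complex.cos v + Complex.cos ((n:ℂ)*v) * Complex.sin v)
        ≤ Complex.abs (Complex.sin ((n:ℂ)*v)) * Complex.abs (Complex.cos v)
          + Complex.abs (Complex.cos ((n:ℂ)*v)) * Complex.abs (Complex.sin v) := by
          refine (Complex.abs.add_le _ _).trans ?_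
          rw [map_mul, map_mul]
      _ ≤ ((n:ℝ) * Real.exp (((n:ℝ)-1) * |v.im|) * Complex.abs (Complex.sin v)) * Real.exp |v.im|
          + Real.exp ((n:ℝ) * |v.im|) * Complex.abs (Complex.sin v) :=
          add_le_add (mul_le_mul ih (abs_cos_le v) (Complex.abs.nonneg _) (by positivity))
            (mul_le_mul_of_nonneg_right hcn hS)
      _ = ((n:ℝ)+1) * Real.exp (((n:ℝ)+1-1) * |v.im|) * Complex.abs (Complex.sin v) := by
          rw [show ((n:ℝ)+1-1) = (n:ℝ) by ring, ← hE]; ring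

lemma csin_add_nat_mul_pi (x : ℂ) (n : ℕ) :
    Complex.sin (x + (n:ℂ) * (Real.pi:ℂ)) = (-1)^n * Complex.sin x := by
  induction n with
  | zero => simp
  | succ m ih =>
    have h : x + ((m:ℂ)+1) * (Real.pi:ℂ) = (x + (m:ℂ)*(Real.pi:ℂ)) + (Real.pi:ℂ) := by ring
    push_cast
    rw [h, Complex.sin_add_pi, ih]
    ring

lemma thetaTerm_pair (n : ℕ) (w τ : ℂ) :
    thetaTerm (n:ℤ) w τ + thetaTerm (-((n:ℤ)+1)) w τ
      = (-1)^(n+1) * 2 * Complex.exp ((Real.pi:ℂ)*Complex.I*((n:ℂ)+1/2)^2*τ)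
        * Complex.sin ((2*(n:ℂ)+1)*((Real.pi:ℂ)*w)) := by
  set b : ℂ := (Real.pi:ℂ)*(2*(n:ℂ)+1)*(w+1/2) with hb
  have e1 : thetaTerm (n:ℤ) w τ = Complex.exp ((Real.pi:ℂ)*Complex.I*((n:ℂ)+1/2)^2*τ) *
      Complex.exp (b * Complex.I) := by
    rw [thetaTerm, ← Complex.exp_add, hb]; congr 1; push_cast; ring
  have e2 : thetaTerm (-((n:ℤ)+1)) w τ = Complex.exp ((Real.pi:ℂ)*Complex.I*((n:ℂ)+1/2)^2*τ) *
      Complex.exp (-(b * Complex.I)) := by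
    rw [thetaTerm, ← Complex.exp_add, hb]; congr 1; push_cast; ring
  have hcos : Complex.exp (b * Complex.I) + Complex.exp (-(b * Complex.I)) = 2 * Complex.cos b := by
    rw [Complex.two_cos, neg_mul]
  have hbeq : b = ((2*(n:ℂ)+1)*((Real.pi:ℂ)*w) + (n:ℂ)*(Real.pi:ℂ)) + (Real.pi:ℂ)/2 := by
    rw [hb]; ring
  have hcb : Complex.cos b = (-1)^(n+1) * Complex.sin ((2*(n:ℂ)+1)*((Real.pi:ℂ)*w)) := by
    rw [hbeq, Complex.cos_add_pi_div_two, csin_add_nat_mul_pi]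
    ring
  rw [e1, e2, ← mul_add, hcos, hcb]
  ring

lemma abs_exp_pitau (c : ℝ) (τ : ℂ) :
    Complex.abs (Complex.exp ((c:ℂ) * (Complex.I * τ))) = Real.exp (-(c * τ.im)) := by
  rw [Complex.abs_exp]
  congr 1
  rw [Complex.re_ofReal_mul]
  simp

theorem theta_lower_bound {τ : ℂ} (ht2 : 2 ≤ Real.pi * τ.im) {w : ℂ} (hw : |w.im| ≤ τ.im / 2) :
    1/2 * Real.exp (-(Real.pi * τ.im)/4) * Complex.abs (Complex.sin ((Real.pi:ℂ) * w))
      ≤ Complex.abs (theta w τ) := by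
  have hπ := Real.pi_pos
  have ht : 0 < τ.im := by nlinarith
  set s : ℝ := Complex.abs (Complex.sin ((Real.pi:ℂ) * w)) with hs
  have hs0 : 0 ≤ s := Complex.abs.nonneg _
  set E : ℝ := Real.exp (-(Real.pi * τ.im)/4) with hE
  have hE0 : 0 < E := Real.exp_pos _
  set x : ℝ := Real.exp (-(Real.pi * τ.im)) with hx
  have hx0 : 0 < x := Real.exp_pos _
  have hx7 : x ≤ 1/7 := by
    have h2 : Real.exp 2 = Real.exp 1 * Real.exp 1 := by
      rw [← Real.exp_add]; norm_num
    have he : (2.7182818283:ℝ) < Real.exp 1 := Real.exp_one_gt_d9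
    have h7 : (7:ℝ) ≤ Real.exp 2 := by nlinarith
    have : x ≤ Real.exp (-2) := Real.exp_le_exp.mpr (by linarith)
    rw [Real.exp_neg] at this
    calc x ≤ (Real.exp 2)⁻¹ := this
      _ ≤ 1/7 := by rw [one_div]; exact inv_anti₀ (by norm_num) h7
  -- the paired series
  have hsum := summable_thetaTerm ht w
  set g : ℕ → ℂ := fun n => thetaTerm (n:ℤ) w τ + thetaTerm (-((n:ℤ)+1)) w τ with hg
  have h1 : theta w τ = ∑' n : ℕ, g n := by
    rw [theta_def]
    exact (tsum_nat_add_neg_add_one hsum).symm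
  have hgsum : Summable g := hsum.nat_add_neg_add_one
  have h2 : ∑' n : ℕ, g n = g 0 + ∑' n : ℕ, g (n+1) := hgsum.tsum_eq_zero_add
  -- absolute value of each pair
  have habs : ∀ n : ℕ, Complex.abs (g n) = 2 * Real.exp (-(Real.pi*((n:ℝ)+1/2)^2*τ.im)) *
      Complex.abs (Complex.sin ((2*(n:ℂ)+1)*((Real.pi:ℂ)*w))) := by
    intro n
    rw [hg]
    simp only []
    rw [thetaTerm_pair n w τ, map_mul, map_mul]
    have hone : Complex.abs ((-1:ℂ)^(n+1) * 2) = 2 := by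
      rw [map_mul, map_pow, map_neg_eq_map, map_one, one_pow, one_mul, Complex.abs_two]
    have harg : (Real.pi:ℂ)*Complex.I*((n:ℂ)+1/2)^2*τ
        = ((Real.pi*((n:ℝ)+1/2)^2 : ℝ):ℂ) * (Complex.I * τ) := by
      push_cast; ring
    rw [hone, harg, abs_exp_pitau]
  -- main term
  have hmain : Complex.abs (g 0) = 2 * E * s := by
    rw [habs 0]
    rw [show (2*((0:ℕ):ℂ)+1) = 1 by norm_num, one_mul,
      show -(Real.pi*(((0:ℕ):ℝ)+1/2)^2*τ.im) = -(Real.pi*τ.im)/4 by push_cast; ring,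
      ← hE, ← hs]
  have hx1 : x ≤ 1 := hx7.trans (by norm_num)
  have hr1 : 2*x < 1 := by linarith
  have h2n : ∀ m:ℕ, ((2*m+3 : ℕ) : ℝ) ≤ 3 * 2^m := by
    intro m
    induction m with
    | zero => norm_num
    | succ k ih =>
      have h1 : (1:ℝ) ≤ 2^k := one_le_pow₀ (by norm_num)
      push_cast at ih ⊢
      rw [pow_succ]
      linarith
  -- tail term bound
  have hgn : ∀ n : ℕ, Complex.abs (g (n+1)) ≤ 6 * E * s * x * (2*x)^n := by
    intro n
    rw [habs (n+1),
      show (2*(((n+1:ℕ)):ℂ)+1) = (((2*n+3 : ℕ)):ℂ) by push_cast; ring]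
    have hma := abs_sin_nat_mul_le (2*n+3) ((Real.pi:ℂ)*w)
    have him : |((Real.pi:ℂ)*w).im| = Real.pi * |w.im| := by
      rw [show ((Real.pi:ℂ)*w).im = Real.pi * w.im by simp, abs_mul, abs_of_pos hπ]
    rw [him] at hma
    have hexp1 : Real.exp (((((2*n+3:ℕ)):ℝ) - 1) * (Real.pi * |w.im|))
        ≤ Real.exp (((2*n+2:ℝ)) * (Real.pi * (τ.im/2))) := by
      apply Real.exp_le_exp.mpr
      push_cast
      have hco : (0:ℝ) ≤ 2*(n:ℝ)+2 := by positivity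
      calc (2*(n:ℝ)+3-1) * (Real.pi * |w.im|) = (2*(n:ℝ)+2) * (Real.pi * |w.im|) := by ring
        _ ≤ (2*(n:ℝ)+2) * (Real.pi * (τ.im/2)) := by
            apply mul_le_mul_of_nonneg_left _ hco
            exact mul_le_mul_of_nonneg_left hw hπ.le
    have hstep1 : Complex.abs (Complex.sin ((((2*n+3:ℕ)):ℂ) * ((Real.pi:ℂ)*w)))
        ≤ ((2*n+3:ℕ):ℝ) * Real.exp ((2*(n:ℝ)+2) * (Real.pi * (τ.im/2))) * s := by
      refine hma.trans ?_
      apply mul_le_mul_of_nonneg_right _ (Complex.abs.nonneg _)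
      apply mul_le_mul_of_nonneg_left _ (by positivity)
      exact hexp1
    -- combine exponentials
    have hexpeq : Real.exp (-(Real.pi*(((n+1:ℕ):ℝ)+1/2)^2*τ.im)) *
        Real.exp ((2*(n:ℝ)+2) * (Real.pi * (τ.im/2))) = E * x^((n+1)^2) := by
      rw [← Real.exp_add, hE, hx, ← Real.exp_nat_mul, ← Real.exp_add]
      congr 1
      push_cast
      ring
    calc 2 * Real.exp (-(Real.pi*((((n+1:ℕ)):ℝ)+1/2)^2*τ.im)) *
          Complex.abs (Complex.sin ((((2*n+3:ℕ)):ℂ) * ((Real.pi:ℂ)*w)))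
        ≤ 2 * Real.exp (-(Real.pi*(((n+1:ℕ):ℝ)+1/2)^2*τ.im)) *
          (((2*n+3:ℕ):ℝ) * Real.exp ((2*(n:ℝ)+2) * (Real.pi * (τ.im/2))) * s) := by
          apply mul_le_mul_of_nonneg_left hstep1 (by positivity)
      _ = (2 * ((2*n+3:ℕ):ℝ)) * (E * x^((n+1)^2)) * s := by
          rw [← hexpeq]; ring
      _ ≤ (2 * ((2*n+3:ℕ):ℝ)) * (E * x^(n+1)) * s := by
          have hpw : x^((n+1)^2) ≤ x^(n+1) :=
            pow_le_pow_of_le_one hx0.le hx1 (Nat.le_self_pow (by norm_num) _)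
          have : E * x^((n+1)^2) ≤ E * x^(n+1) :=
            mul_le_mul_of_nonneg_left hpw hE0.le
          have hc : (0:ℝ) ≤ 2 * ((2*n+3:ℕ):ℝ) := by positivity
          nlinarith [mul_le_mul_of_nonneg_left this hc, hs0,
            mul_nonneg hc (mul_nonneg hE0.le (pow_nonneg hx0.le (n+1)))]
      _ ≤ 6 * E * s * x * (2*x)^n := by
          have hcoef : (2 * ((2*n+3:ℕ):ℝ)) ≤ 6 * 2^n := by
            have := h2n n; linarith
          have hrw : 6*E*s*x*(2*x)^n = (6 * 2^n) * (E * s * (x*x^n)) := by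
            rw [mul_pow]; ring
          have hlw : (2 * ((2*n+3:ℕ):ℝ)) * (E * x^(n+1)) * s
              = (2 * ((2*n+3:ℕ):ℝ)) * (E * s * (x*x^n)) := by
            rw [pow_succ]; ring
          rw [hrw, hlw]
          exact mul_le_mul_of_nonneg_right hcoef (by positivity)
  -- sum tail
  set T : ℂ := ∑' n : ℕ, g (n+1) with hT
  have hmaj : Summable (fun n : ℕ => 6*E*s*x * (2*x)^n) :=
    (summable_geometric_of_lt_one (by positivity) hr1).mul_left _
  have hnormsum : Summable (fun n : ℕ => ‖g (n+1)‖) := by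
    refine Summable.of_nonneg_of_le (fun n => norm_nonneg _) (fun n => ?_) hmaj
    rw [Complex.norm_eq_abs]; exact hgn n
  have hTb : Complex.abs T ≤ (6*E*s*x) * (1-(2*x))⁻¹ := by
    calc Complex.abs T = ‖T‖ := (Complex.norm_eq_abs _).symm
      _ ≤ ∑' n : ℕ, ‖g (n+1)‖ := norm_tsum_le_tsum_norm hnormsum
      _ ≤ ∑' n : ℕ, (6*E*s*x) * (2*x)^n := by
          refine Summable.tsum_le_tsum (fun n => ?_) hnormsum hmaj
          rw [Complex.norm_eq_abs]; exact hgn n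
      _ = (6*E*s*x) * (1-(2*x))⁻¹ := by
          rw [tsum_mul_left, tsum_geometric_of_lt_one (by positivity) hr1]
  have hTfinal : Complex.abs T ≤ 6/5 * E * s := by
    have h1x : (1 - 2*x)⁻¹ ≤ 7/5 := by
      have h57 : (5/7:ℝ) ≤ 1-2*x := by linarith
      calc (1-2*x)⁻¹ ≤ (5/7:ℝ)⁻¹ := inv_anti₀ (by norm_num) h57
        _ = 7/5 := by norm_num
    calc Complex.abs T ≤ (6*E*s*x) * (1-(2*x))⁻¹ := hTb
      _ ≤ (6*E*s*x) * (7/5) := by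
          apply mul_le_mul_of_nonneg_left h1x (by positivity)
      _ ≤ (6*E*s*(1/7)) * (7/5) := by
          have : 6*E*s*x ≤ 6*E*s*(1/7) :=
            mul_le_mul_of_nonneg_left hx7 (by positivity)
          linarith
      _ = 6/5 * E * s := by ring
  -- conclude
  have hth : theta w τ = g 0 + T := by rw [h1, h2]
  have htri := Complex.abs.sub_le_add (g 0 + T) T
  rw [add_sub_cancel_right, hmain] at htri
  rw [hth]
  nlinarith [mul_nonneg hE0.le hs0, Complex.abs.nonneg (g 0 + T)]

lemma theta_add_int_mul_tau (k : ℤ) (z τ : ℂ) :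
    ∃ u : ℂ, u ≠ 0 ∧ theta (z + (k:ℂ)*τ) τ = u * theta z τ := by
  induction k using Int.induction_on with
  | zero => exact ⟨1, one_ne_zero, by simp⟩
  | succ n ih =>
    obtain ⟨u, hu, he⟩ := ih
    refine ⟨Complex.exp (-(Real.pi:ℂ) * Complex.I * (τ + 2*(z + (((n:ℤ)):ℂ)*τ) + 1)) * u,
      mul_ne_zero (Complex.exp_ne_zero _) hu, ?_⟩
    rw [show z + ((((n:ℤ)+1):ℤ):ℂ)*τ = (z + (((n:ℤ)):ℂ)*τ) + τ by push_cast; ring,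
      theta_add_tau, he]
    push_cast
    ring
  | pred n ih =>
    obtain ⟨u, hu, he⟩ := ih
    have h := theta_add_tau (z + ((-(n:ℤ)-1 : ℤ):ℂ)*τ) τ
    rw [show (z + ((-(n:ℤ)-1 : ℤ):ℂ)*τ) + τ = z + ((-(n:ℤ) : ℤ):ℂ)*τ by push_cast; ring] at h
    rw [he] at h
    refine ⟨(Complex.exp (-(Real.pi:ℂ) * Complex.I *
        (τ + 2*(z + ((-(n:ℤ)-1 : ℤ):ℂ)*τ) + 1)))⁻¹ * u,
      mul_ne_zero (inv_ne_zero (Complex.exp_ne_zero _)) hu, ?_⟩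
    field_simp at h ⊢
    linear_combination -h

lemma theta_zero_lattice {τ : ℂ} (ht2 : 2 ≤ Real.pi * τ.im) {w : ℂ}
    (h0 : theta w τ = 0) : ∃ m n : ℤ, w = (m:ℂ) * τ + (n:ℂ) := by
  have hπ := Real.pi_pos
  have ht : 0 < τ.im := by nlinarith
  set m : ℤ := round (w.im / τ.im) with hm
  set w' : ℂ := w - (m:ℂ)*τ with hw'
  have him : |w'.im| ≤ τ.im / 2 := by
    have h1 : w'.im = w.im - (m:ℝ) * τ.im := by simp [hw']
    have h2 : |w.im / τ.im - (m:ℝ)| ≤ 1/2 := abs_sub_round _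
    have h3 : w.im - (m:ℝ)*τ.im = (w.im / τ.im - (m:ℝ)) * τ.im := by
      field_simp
    rw [h1, h3, abs_mul, abs_of_pos ht]
    calc |w.im / τ.im - (m:ℝ)| * τ.im ≤ 1/2 * τ.im := by
          exact mul_le_mul_of_nonneg_right h2 ht.le
      _ = τ.im / 2 := by ring
  obtain ⟨u, hu, he⟩ := theta_add_int_mul_tau m w' τ
  have hww : w' + (m:ℂ)*τ = w := by rw [hw']; ring
  rw [hww, h0] at he
  have h0' : theta w' τ = 0 := by
    rcases mul_eq_zero.mp he.symm with h | h
    · exact absurd h hu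
    · exact h
  have hest := theta_lower_bound ht2 him
  rw [h0', map_zero] at hest
  have hsin : Complex.sin ((Real.pi:ℂ) * w') = 0 := by
    have hE := Real.exp_pos (-(Real.pi * τ.im)/4)
    have habs : Complex.abs (Complex.sin ((Real.pi:ℂ) * w')) ≤ 0 := by nlinarith
    have := Complex.abs.nonneg (Complex.sin ((Real.pi:ℂ) * w'))
    exact Complex.abs.eq_zero.mp (le_antisymm habs this)
  rw [Complex.sin_eq_zero_iff] at hsin
  obtain ⟨k, hk⟩ := hsin
  have hπ0 : (Real.pi : ℂ) ≠ 0 := Complex.ofReal_ne_zero.mpr Real.pi_ne_zero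
  have hwk : w' = (k:ℂ) :=
    mul_left_cancel₀ hπ0 (by rw [hk]; ring)
  exact ⟨m, k, by rw [← hww, hwk]; ring⟩

lemma theta_tau_add_int (k : ℤ) (z τ : ℂ) :
    theta z (τ + (k:ℂ)) = Complex.exp ((Real.pi:ℂ) * Complex.I * (k:ℂ) / 4) * theta z τ := by
  induction k using Int.induction_on with
  | zero => simp
  | succ n ih =>
    rw [show τ + ((((n:ℤ)+1):ℤ):ℂ) = (τ + (((n:ℤ)):ℂ)) + 1 by push_cast; ring,
      theta_tau_add_one, ih, ← mul_assoc, ← Complex.exp_add]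
    congr 2
    push_cast
    ring
  | pred n ih =>
    have h := theta_tau_add_one z (τ + ((-(n:ℤ)-1:ℤ):ℂ))
    rw [show τ + ((-(n:ℤ)-1:ℤ):ℂ) + 1 = τ + ((-(n:ℤ):ℤ):ℂ) by push_cast; ring, ih] at h
    have hinv := Complex.exp_ne_zero ((Real.pi:ℂ) * Complex.I / 4)
    have : theta z (τ + ((-(n:ℤ)-1:ℤ):ℂ)) =
        (Complex.exp ((Real.pi:ℂ) * Complex.I / 4))⁻¹ *
          (Complex.exp ((Real.pi:ℂ) * Complex.I * ((-(n:ℤ):ℤ):ℂ) / 4)) * theta z τ := by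
      field_simp at h ⊢
      linear_combination -h
    rw [this, ← Complex.exp_neg, ← Complex.exp_add]
    congr 2
    push_cast
    ring

lemma sin_slope_lower : ∃ r : ℝ, 0 < r ∧ ∀ ζ : ℂ, Complex.abs ζ < r →
    Complex.abs ζ / 2 ≤ Complex.abs (Complex.sin ζ) := by
  have hd : HasDerivAt Complex.sin 1 0 := by
    simpa using Complex.hasDerivAt_sin 0
  rw [hasDerivAt_iff_tendsto_slope] at hd
  have habs : Tendsto (fun ζ : ℂ => Complex.abs (slope Complex.sin 0 ζ)) (𝓝[≠] 0) (𝓝 1) := by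
    have := (Complex.continuous_abs.tendsto 1).comp hd
    simpa [Function.comp_def] using this
  have hev : ∀ᶠ ζ in 𝓝[≠] (0:ℂ), 1/2 < Complex.abs (slope Complex.sin 0 ζ) :=
    habs.eventually (eventually_gt_nhds (by norm_num))
  rw [eventually_nhdsWithin_iff] at hev
  rw [Metric.eventually_nhds_iff] at hev
  obtain ⟨r, hr0, hr⟩ := hev
  refine ⟨r, hr0, fun ζ hζ => ?_⟩
  rcases eq_or_ne ζ 0 with rfl | hζ0
  · simp
  · have hd0 : dist ζ 0 < r := by rw [Complex.dist_eq, sub_zero]; exact hζ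
    have := hr hd0 hζ0
    rw [slope_def_field, Complex.sin_zero, sub_zero, sub_zero, map_div₀] at this
    have hζpos : 0 < Complex.abs ζ := Complex.abs.pos hζ0
    rw [lt_div_iff₀ hζpos] at this
    linarith

def GoodPair (τ : ℂ) : Prop :=
  ∃ (τ' a : ℂ) (F : ℂ → ℂ), 2 ≤ Real.pi * τ'.im ∧ a ≠ 0 ∧ Continuous F ∧
    (∀ z, F z ≠ 0) ∧ (∀ z, theta z τ = F z * theta (a*z) τ') ∧
    (∀ (z : ℂ) (m n : ℤ), a*z = (m:ℂ)*τ' + (n:ℂ) → ∃ m' n' : ℤ, z = (m':ℂ)*τ + (n':ℂ))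

lemma good_base {τ : ℂ} (h : 2 ≤ Real.pi * τ.im) : GoodPair τ :=
  ⟨τ, 1, fun _ => 1, h, one_ne_zero, continuous_const, fun _ => one_ne_zero,
    fun z => by simp, fun z m n hz => ⟨m, n, by rw [← hz]; ring⟩⟩

lemma good_shift {τ : ℂ} (k : ℤ) (h : GoodPair (τ + (k:ℂ))) : GoodPair τ := by
  obtain ⟨τ', a, F, hτ', ha, hFc, hFne, hrel, hlat⟩ := h
  refine ⟨τ', a, fun z => Complex.exp (-((Real.pi:ℂ) * Complex.I * (k:ℂ) / 4)) * F z,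
    hτ', ha, (continuous_const.mul hFc), fun z => mul_ne_zero (Complex.exp_ne_zero _) (hFne z),
    fun z => ?_, fun z m n hz => ?_⟩
  · have h1 := theta_tau_add_int k z τ
    have h2 := hrel z
    rw [h2] at h1
    have h3 : theta z τ = Complex.exp (-((Real.pi:ℂ) * Complex.I * (k:ℂ) / 4)) *
        (F z * theta (a*z) τ') := by
      rw [Complex.exp_neg]
      field_simp at h1 ⊢
      linear_combination -h1
    rw [h3]; ring
  · obtain ⟨m', n', hmn⟩ := hlat z m n hz
    exact ⟨m', n' + m' * k, by rw [hmn]; push_cast; ring⟩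

lemma good_S {τ : ℂ} (hτ : 0 < τ.im) (h : GoodPair (-1/τ)) : GoodPair τ := by
  have hτ0 : τ ≠ 0 := fun hh => by simp [hh] at hτ
  obtain ⟨u, huc, hune, hurel⟩ := theta_S hτ
  obtain ⟨τ', a, F, hτ', ha, hFc, hFne, hrel, hlat⟩ := h
  refine ⟨τ', a/τ, fun z => u z * F (z/τ), hτ', div_ne_zero ha hτ0,
    huc.mul (hFc.comp (continuous_id.div_const τ)),
    fun z => mul_ne_zero (hune z) (hFne _), fun z => ?_, fun z m n hz => ?_⟩
  · rw [hurel z, hrel (z/τ), show a * (z/τ) = a/τ*z by ring]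
    ring
  · have hz' : a * (z/τ) = (m:ℂ)*τ' + (n:ℂ) := by rw [← hz]; ring
    obtain ⟨m', n', hmn⟩ := hlat (z/τ) m n hz'
    refine ⟨n', -m', ?_⟩
    have : z = ((m':ℂ) * (-1/τ) + (n':ℂ)) * τ := by
      rw [← hmn]; field_simp
    rw [this]
    push_cast
    field_simp
    ring

lemma good_all : ∀ N : ℕ, ∀ τ : ℂ, 0 < τ.im → 2 ≤ Real.pi * τ.im * (3/2)^N → GoodPair τ := by
  intro N
  induction N with
  | zero => intro τ h0 h; exact good_base (by simpa using h)
  | succ n ih =>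
    intro τ h0 h
    by_cases hbig : 2 ≤ Real.pi * τ.im
    · exact good_base hbig
    push_neg at hbig
    have hπ := Real.pi_pos
    have hπ2 : 3.141592 < Real.pi := Real.pi_gt_d6
    set k : ℤ := round τ.re with hk
    set σ : ℂ := τ - (k:ℂ) with hσ
    have hσim : σ.im = τ.im := by simp [hσ]
    have hσre : |σ.re| ≤ 1/2 := by
      have : σ.re = τ.re - (k:ℝ) := by simp [hσ]
      rw [this, hk]
      exact abs_sub_round _
    have hσ0 : σ ≠ 0 := fun hh => by
      rw [hh] at hσim; simp at hσim; rw [← hσim] at h0; exact lt_irrefl _ h0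
    have hσpos : 0 < σ.im := hσim ▸ h0
    have hns : Complex.normSq σ ≤ 2/3 := by
      rw [Complex.normSq_apply]
      have h1 : σ.re * σ.re ≤ 1/4 := by
        have := abs_le.mp hσre
        nlinarith [this.1, this.2]
      have h2 : σ.im * σ.im ≤ 5/12 := by
        rw [hσim]
        nlinarith [h0, hbig, hπ2]
      linarith
    have hnspos : 0 < Complex.normSq σ := Complex.normSq_pos.mpr hσ0
    have him' : (-1/σ).im = σ.im / Complex.normSq σ := by
      rw [neg_div, Complex.neg_im, one_div, Complex.inv_im]
      field_simp
    have hpos' : 0 < (-1/σ).im := by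
      rw [him']; positivity
    have hgrow : (3/2) * σ.im ≤ (-1/σ).im := by
      rw [him', le_div_iff₀ hnspos]
      nlinarith [hσpos, hns]
    have hQ : GoodPair (-1/σ) := by
      apply ih (-1/σ) hpos'
      have hpow : (0:ℝ) < (3/2)^n := by positivity
      calc (2:ℝ) ≤ Real.pi * τ.im * (3/2)^(n+1) := h
        _ = Real.pi * ((3/2) * τ.im) * (3/2)^n := by ring
        _ ≤ Real.pi * (-1/σ).im * (3/2)^n := by
            have : (3/2) * τ.im ≤ (-1/σ).im := by rw [← hσim] at *; exact hgrow
            gcongr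
    have hQσ : GoodPair σ := good_S hσpos hQ
    have : GoodPair (τ + ((-k : ℤ):ℂ)) := by
      rw [show τ + ((-k : ℤ):ℂ) = σ by rw [hσ]; push_cast; ring]
      exact hQσ
    exact good_shift (-k) this

/-- For `τ₀ ∈ ℍ` there is a constant `c > 0` with `|θ₁₁(z;τ₀)| ≥ c|z|` on the closed
fundamental parallelogram `Λ = {xτ₀ + y : |x| ≤ 1/2, |y| ≤ 1/2}`. -/
theorem theta_abs_lower_bound_on_fundamental_domain (τ₀ : ℂ) (hτ₀ : 0 < τ₀.im) :
    ∃ c : ℝ, 0 < c ∧ ∀ (z : ℂ) (x y : ℝ), z = (x : ℂ) * τ₀ + (y : ℂ) →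
      |x| ≤ 1 / 2 → |y| ≤ 1 / 2 → c * ‖z‖ ≤ ‖theta z τ₀‖ := by
  have hπ := Real.pi_pos
  -- a good pair for τ₀
  obtain ⟨N, hN⟩ := pow_unbounded_of_one_lt (2/(Real.pi * τ₀.im)) (by norm_num : (1:ℝ) < 3/2)
  have hgp : GoodPair τ₀ := by
    apply good_all N τ₀ hτ₀
    rw [div_lt_iff₀ (by positivity)] at hN
    nlinarith
  obtain ⟨τ', a, F, hτ', ha, hFc, hFne, hrel, hlat⟩ := hgp
  have ht' : 0 < τ'.im := by nlinarith
  -- the fundamental parallelogram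
  set K : Set ℂ := (fun p : ℝ × ℝ => (p.1:ℂ) * τ₀ + (p.2:ℂ)) ''
    (Set.Icc (-(1/2)) (1/2) ×ˢ Set.Icc (-(1/2)) (1/2)) with hK
  have hKcont : Continuous (fun p : ℝ × ℝ => (p.1:ℂ) * τ₀ + (p.2:ℂ)) := by fun_prop
  have hKc : IsCompact K := (isCompact_Icc.prod isCompact_Icc).image hKcont
  have hmemK : ∀ (z : ℂ) (x y : ℝ), z = (x : ℂ) * τ₀ + (y : ℂ) →
      |x| ≤ 1/2 → |y| ≤ 1/2 → z ∈ K := by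
    intro z x y hzeq hx hy
    exact ⟨(x, y), ⟨Set.mem_Icc.mpr (abs_le.mp hx), Set.mem_Icc.mpr (abs_le.mp hy)⟩, hzeq.symm⟩
  have h0K : (0:ℂ) ∈ K := hmemK 0 0 0 (by simp) (by norm_num) (by norm_num)
  -- nonvanishing on K ∖ {0}
  have hnv : ∀ z ∈ K, z ≠ 0 → theta z τ₀ ≠ 0 := by
    rintro z ⟨⟨x, y⟩, ⟨hx, hy⟩, rfl⟩ hz0 hcon
    rw [Set.mem_Icc] at hx hy
    have h1 : theta (a*((x:ℂ) * τ₀ + (y:ℂ))) τ' = 0 := by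
      have h2 := hrel ((x:ℂ) * τ₀ + (y:ℂ))
      rw [hcon] at h2
      rcases mul_eq_zero.mp h2.symm with h | h
      · exact absurd h (hFne _)
      · exact h
    obtain ⟨m, n, hmn⟩ := theta_zero_lattice hτ' h1
    obtain ⟨m', n', hz'⟩ := hlat _ m n hmn
    have hxm : x = (m':ℝ) := by
      have him := congrArg Complex.im hz'
      simp at him
      rcases him with h | h
      · exact h
      · exact absurd h (ne_of_gt hτ₀)
    have hyn : y = (n':ℝ) := by
      have hre := congrArg Complex.re hz'
      simp at hre
      rw [hxm] at hre
      linarith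
    have hm0 : m' = 0 := by
      by_contra hm0
      have h1 : (1:ℤ) ≤ |m'| := Int.one_le_abs hm0
      have h2 : (1:ℝ) ≤ |(m':ℝ)| := by exact_mod_cast h1
      rw [← hxm] at h2
      have := abs_le.mpr ⟨hx.1, hx.2⟩
      linarith
    have hn0 : n' = 0 := by
      by_contra hn0
      have h1 : (1:ℤ) ≤ |n'| := Int.one_le_abs hn0
      have h2 : (1:ℝ) ≤ |(n':ℝ)| := by exact_mod_cast h1
      rw [← hyn] at h2
      have := abs_le.mpr ⟨hy.1, hy.2⟩
      linarith
    apply hz0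
    show (x:ℂ) * τ₀ + (y:ℂ) = 0
    rw [hz', hm0, hn0]
    simp
  -- minimum of |F| on K
  obtain ⟨zF, hzFK, hzFmin⟩ := hKc.exists_isMinOn ⟨0, h0K⟩
    ((Complex.continuous_abs.comp hFc).continuousOn)
  have hmF : 0 < Complex.abs (F zF) := Complex.abs.pos (hFne zF)
  -- sin lower bound radius
  obtain ⟨r, hr0, hrsin⟩ := sin_slope_lower
  have hA : 0 < Complex.abs a := Complex.abs.pos ha
  set A : ℝ := Complex.abs a with hAdef
  set ρ : ℝ := min (r/(2*Real.pi*A)) (τ'.im/(2*A)) with hρ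
  have hρ0 : 0 < ρ := lt_min (by positivity) (by positivity)
  set E' : ℝ := Real.exp (-(Real.pi * τ'.im)/4) with hE'
  have hE'0 : 0 < E' := Real.exp_pos _
  set c₁ : ℝ := Complex.abs (F zF) * (1/2 * E') * (Real.pi * A / 2) with hc₁
  have hc₁0 : 0 < c₁ := by positivity
  -- near-zero estimate
  have hnear : ∀ z ∈ K, Complex.abs z ≤ ρ → c₁ * Complex.abs z ≤ Complex.abs (theta z τ₀) := by
    intro z hzK hzρ
    have habsz : 0 ≤ Complex.abs z := Complex.abs.nonneg z
    have him : |(a*z).im| ≤ τ'.im/2 := by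
      calc |(a*z).im| ≤ Complex.abs (a*z) := Complex.abs_im_le_abs _
        _ = A * Complex.abs z := by rw [map_mul]
        _ ≤ A * (τ'.im/(2*A)) := by
            exact mul_le_mul_of_nonneg_left (hzρ.trans (min_le_right _ _)) hA.le
        _ = τ'.im/2 := by field_simp
    have hest := theta_lower_bound hτ' him
    have habspi : Complex.abs ((Real.pi:ℂ)*(a*z)) = Real.pi * (A * Complex.abs z) := by
      rw [map_mul, map_mul, Complex.abs_ofReal, abs_of_pos hπ]
    have hsmall : Complex.abs ((Real.pi:ℂ)*(a*z)) < r := by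
      rw [habspi]
      calc Real.pi * (A * Complex.abs z) ≤ Real.pi * (A * (r/(2*Real.pi*A))) := by
            have := hzρ.trans (min_le_left _ _)
            exact mul_le_mul_of_nonneg_left (mul_le_mul_of_nonneg_left this hA.le) hπ.le
        _ = r/2 := by field_simp
        _ < r := by linarith
    have hsin := hrsin _ hsmall
    rw [habspi] at hsin
    have hFz : Complex.abs (F zF) ≤ Complex.abs (F z) := hzFmin hzK
    have hcomp : Complex.abs (theta z τ₀) = Complex.abs (F z) * Complex.abs (theta (a*z) τ') := by
      rw [hrel z, map_mul]
    rw [hcomp]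
    calc c₁ * Complex.abs z
        = Complex.abs (F zF) * ((1/2 * E') * (Real.pi * (A * Complex.abs z) / 2)) := by
          rw [hc₁]; ring
      _ ≤ Complex.abs (F zF) * ((1/2 * E') * Complex.abs (Complex.sin ((Real.pi:ℂ)*(a*z)))) := by
          apply mul_le_mul_of_nonneg_left _ hmF.le
          apply mul_le_mul_of_nonneg_left _ (by positivity)
          linarith
      _ ≤ Complex.abs (F zF) * Complex.abs (theta (a*z) τ') := by
          apply mul_le_mul_of_nonneg_left _ hmF.le
          calc (1/2 * E') * Complex.abs (Complex.sin ((Real.pi:ℂ)*(a*z)))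
              = 1/2 * E' * Complex.abs (Complex.sin ((Real.pi:ℂ)*(a*z))) := by ring
            _ ≤ Complex.abs (theta (a*z) τ') := hest
      _ ≤ Complex.abs (F z) * Complex.abs (theta (a*z) τ') := by
          apply mul_le_mul_of_nonneg_right hFz (Complex.abs.nonneg _)
  -- upper bound for |z| on K
  set M : ℝ := Complex.abs τ₀ + 1 with hM
  have hM0 : 0 < M := by positivity
  have hMb : ∀ z ∈ K, Complex.abs z ≤ M := by
    rintro z ⟨⟨x, y⟩, ⟨hx, hy⟩, rfl⟩
    rw [Set.mem_Icc] at hx hy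
    have hxa : |x| ≤ 1/2 := abs_le.mpr ⟨hx.1, hx.2⟩
    have hya : |y| ≤ 1/2 := abs_le.mpr ⟨hy.1, hy.2⟩
    calc Complex.abs ((x:ℂ) * τ₀ + (y:ℂ))
        ≤ Complex.abs ((x:ℂ) * τ₀) + Complex.abs (y:ℂ) := Complex.abs.add_le _ _
      _ = |x| * Complex.abs τ₀ + |y| := by rw [map_mul, Complex.abs_ofReal, Complex.abs_ofReal]
      _ ≤ 1/2 * Complex.abs τ₀ + 1/2 := by
          have := Complex.abs.nonneg τ₀
          have h1 : |x| * Complex.abs τ₀ ≤ 1/2 * Complex.abs τ₀ :=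
            mul_le_mul_of_nonneg_right hxa this
          linarith
      _ ≤ M := by
          have := Complex.abs.nonneg τ₀
          rw [hM]; linarith
  -- split into near and far
  by_cases hne : (K ∩ {z : ℂ | ρ ≤ Complex.abs z}).Nonempty
  · obtain ⟨z₁, hz₁K, hz₁min⟩ := (hKc.inter_right
      (isClosed_le continuous_const Complex.continuous_abs)).exists_isMinOn hne
      ((Complex.continuous_abs.comp (theta_continuous hτ₀)).continuousOn)
    have hz₁ne : z₁ ≠ 0 := by
      intro h0
      have := hz₁K.2
      rw [h0] at this
      simp at this
      linarith
    have hm1 : 0 < Complex.abs (theta z₁ τ₀) :=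
      Complex.abs.pos (hnv z₁ hz₁K.1 hz₁ne)
    set m₁ : ℝ := Complex.abs (theta z₁ τ₀) with hm₁
    refine ⟨min c₁ (m₁/M), lt_min hc₁0 (by positivity), ?_⟩
    intro z x y hzeq hx hy
    have hzK : z ∈ K := hmemK z x y hzeq hx hy
    by_cases hcase : Complex.abs z ≤ ρ
    · calc min c₁ (m₁/M) * Complex.abs z ≤ c₁ * Complex.abs z :=
          mul_le_mul_of_nonneg_right (min_le_left _ _) (Complex.abs.nonneg _)
        _ ≤ Complex.abs (theta z τ₀) := hnear z hzK hcase
    · push_neg at hcase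
      have hzK' : z ∈ K ∩ {z : ℂ | ρ ≤ Complex.abs z} := ⟨hzK, hcase.le⟩
      calc min c₁ (m₁/M) * Complex.abs z ≤ (m₁/M) * Complex.abs z :=
          mul_le_mul_of_nonneg_right (min_le_right _ _) (Complex.abs.nonneg _)
        _ ≤ (m₁/M) * M := by
            apply mul_le_mul_of_nonneg_left (hMb z hzK) (by positivity)
        _ = m₁ := by field_simp
        _ ≤ Complex.abs (theta z τ₀) := hz₁min hzK'
  · refine ⟨c₁, hc₁0, ?_⟩
    intro z x y hzeq hx hy
    have hzK : z ∈ K := hmemK z x y hzeq hx hy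
    have : Complex.abs z ≤ ρ := by
      by_contra hcc
      push_neg at hcc
      exact hne ⟨z, hzK, hcc.le⟩
    exact hnear z hzK this

end
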